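/- arXiv:1106.4222 — 2 statements merged into one kernel-verified Lean document; each statement's English description precedes it below -/
import Mathlib

section
/- If a sequence of real-valued random variables (X_n) converges stably in law to a mixed normal limit X = V·Z, where Z is standard normal independent of the sigma-field F, V is a strictly positive F-measurable random variable, and a sequence (V_n) of positive random variables converges in probability to V, then X_n / V_n converges in distribution to a standard normal random variable. -/
set_option maxHeartbeats 2000000
open MeasureTheory ProbabilityTheory Filter Topology

def StablyToMixedNormal {Ω : Type*} [MeasurableSpace Ω] (P : Measure Ω)
    (X : ℕ → Ω → ℝ) (V : Ω → ℝ) : Prop :=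
  ∀ (f : BoundedContinuousFunction ℝ ℝ) (Z : Ω → ℝ), Measurable Z →
    (∃ C, ∀ ω, |Z ω| ≤ C) →
    Tendsto (fun n => ∫ ω, Z ω * f (X n ω) ∂P) atTop
      (nhds (∫ ω, ∫ z, Z ω * f (V ω * z) ∂(gaussianReal 0 1) ∂P))

namespace StableAux

lemma integrable_of_bound {α : Type*} [MeasurableSpace α] (μ : Measure α) [IsFiniteMeasure μ]
    {g : α → ℝ} (hg : AEStronglyMeasurable g μ) (C : ℝ) (hC : ∀ ω, |g ω| ≤ C) :
    Integrable g μ := by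
  refine ⟨hg, ?_⟩
  exact (hasFiniteIntegral_const C).mono' (ae_of_all _ fun ω => by simpa using hC ω)

lemma exists_measure_tail_lt {α : Type*} [MeasurableSpace α] (μ : Measure α) [IsFiniteMeasure μ]
    (s : ℕ → Set α) (hmeas : ∀ n, MeasurableSet (s n)) (hanti : Antitone s)
    (hempty : ⋂ n, s n = ∅) {ε : ℝ} (hε : 0 < ε) : ∃ n, (μ (s n)).toReal < ε := by
  have ht : Tendsto (fun n => μ (s n)) atTop (𝓝 (μ (⋂ n, s n))) :=
    tendsto_measure_iInter_atTop (fun n => (hmeas n).nullMeasurableSet) hanti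
      ⟨0, measure_ne_top _ _⟩
  rw [hempty, measure_empty] at ht
  have ht2 : Tendsto (fun n => (μ (s n)).toReal) atTop (𝓝 0) := by
    have := (ENNReal.tendsto_toReal (by simp)).comp ht
    simpa [Function.comp_def] using this
  exact ((ht2.eventually (gt_mem_nhds hε)).and (eventually_ge_atTop 0)).exists.imp
    (fun n hn => hn.1)

lemma abs_integral_sub_le {α : Type*} [MeasurableSpace α] (μ : Measure α) [IsProbabilityMeasure μ]
    {g h : α → ℝ} (hg : Integrable g μ) (hh : Integrable h μ)
    {bad : Set α} (hbad : MeasurableSet bad) {a b : ℝ} (ha : 0 ≤ a) (_hb : 0 ≤ b)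
    (hgood : ∀ ω, ω ∉ bad → |g ω - h ω| ≤ a) (hall : ∀ ω, |g ω - h ω| ≤ b) :
    |∫ ω, g ω ∂μ - ∫ ω, h ω ∂μ| ≤ a + b * (μ bad).toReal := by
  rw [← integral_sub hg hh]
  have h1 : |∫ ω, (g ω - h ω) ∂μ| ≤ ∫ ω, |g ω - h ω| ∂μ := by
    simpa [Real.norm_eq_abs] using norm_integral_le_integral_norm (μ := μ) (fun ω => g ω - h ω)
  have hInt2 : Integrable (fun ω => a + bad.indicator (fun _ => b) ω) μ :=
    (integrable_const a).add ((integrable_const b).indicator hbad)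
  have h2 : ∫ ω, |g ω - h ω| ∂μ ≤ ∫ ω, (a + bad.indicator (fun _ => b) ω) ∂μ := by
    refine integral_mono (hg.sub hh).abs hInt2 (fun ω => ?_)
    by_cases hω : ω ∈ bad
    · simp only [Set.indicator_of_mem hω]
      exact le_add_of_nonneg_of_le ha (hall ω)
    · simp only [Set.indicator_of_notMem hω, add_zero]
      exact hgood ω hω
  have h3 : ∫ ω, (a + bad.indicator (fun _ => b) ω) ∂μ = a + b * (μ bad).toReal := by
    rw [integral_add (integrable_const a) ((integrable_const b).indicator hbad),
      integral_const, integral_indicator_const _ hbad]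
    simp [mul_comm, Measure.real]
  linarith

noncomputable def bump (M : ℝ) : BoundedContinuousFunction ℝ ℝ :=
  ⟨⟨fun x => max 0 (min 1 (M + 1 - |x|)), by fun_prop⟩, 1, by
    intro x y
    have h1 : ∀ z : ℝ, 0 ≤ max 0 (min 1 (M + 1 - |z|)) := fun z => le_max_left _ _
    have h2 : ∀ z : ℝ, max 0 (min 1 (M + 1 - |z|)) ≤ 1 := fun z =>
      max_le zero_le_one (min_le_left _ _)
    rw [Real.dist_eq, abs_sub_le_iff]
    constructor <;> linarith [h1 x, h1 y, h2 x, h2 y]⟩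

lemma bump_apply (M x : ℝ) : bump M x = max 0 (min 1 (M + 1 - |x|)) := rfl

lemma bump_eq_one {M x : ℝ} (h : |x| ≤ M) : bump M x = 1 := by
  rw [bump_apply]
  have : (1:ℝ) ≤ M + 1 - |x| := by linarith
  rw [min_eq_left this]; simp

lemma bump_eq_zero {M x : ℝ} (h : M + 1 ≤ |x|) : bump M x = 0 := by
  rw [bump_apply]
  have h1 : M + 1 - |x| ≤ 0 := by linarith
  rw [max_eq_left]
  exact le_trans (min_le_right _ _) h1

lemma bump_nonneg (M x : ℝ) : 0 ≤ bump M x := le_max_left _ _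

lemma bump_le_one (M x : ℝ) : bump M x ≤ 1 := max_le zero_le_one (min_le_left _ _)

/-- Tightness of `X n` from stable convergence. -/
lemma exists_tight {Ω : Type*} [MeasurableSpace Ω] (P : Measure Ω) [IsProbabilityMeasure P]
    (X : ℕ → Ω → ℝ) (V : Ω → ℝ)
    (hXmeas : ∀ n, Measurable (X n)) (hVmeas : Measurable V)
    (hVpos : ∀ ω, 0 < V ω)
    (hstable : StablyToMixedNormal P X V) {ε : ℝ} (hε : 0 < ε) :
    ∃ M : ℝ, 1 ≤ M ∧ ∀ᶠ n in atTop, (P {ω | M < |X n ω|}).toReal < ε := by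
  set γ := gaussianReal 0 1 with hγ
  -- choose K
  obtain ⟨k, hk⟩ := exists_measure_tail_lt P (fun k => {ω | (k:ℝ) < V ω})
    (fun k => measurableSet_lt measurable_const hVmeas)
    (fun i j hij ω hω => lt_of_le_of_lt (show (i:ℝ) ≤ j from Nat.cast_le.mpr hij) hω)
    (by
      ext ω; simp only [Set.mem_iInter, Set.mem_setOf_eq, Set.mem_empty_iff_false, iff_false]
      intro h
      obtain ⟨m, hm⟩ := exists_nat_ge (V ω)
      exact absurd (h m) (not_lt.mpr hm))
    (show (0:ℝ) < ε/3 by linarith)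
  set K : ℝ := (k:ℝ) + 1 with hK
  have hK1 : (1:ℝ) ≤ K := by have h0 : (0:ℝ) ≤ (k:ℝ) := Nat.cast_nonneg k; rw [hK]; linarith
  have hKtail : (P {ω | K < V ω}).toReal < ε/3 := by
    refine lt_of_le_of_lt ?_ hk
    refine ENNReal.toReal_mono (measure_ne_top _ _) (measure_mono fun ω hω => ?_)
    simp only [Set.mem_setOf_eq] at hω ⊢; linarith
  -- choose L
  obtain ⟨l, hl⟩ := exists_measure_tail_lt γ (fun l => {z | (l:ℝ) < |z|})
    (fun l => measurableSet_lt measurable_const measurable_abs)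
    (fun i j hij z hz => lt_of_le_of_lt (show (i:ℝ) ≤ j from Nat.cast_le.mpr hij) hz)
    (by
      ext z; simp only [Set.mem_iInter, Set.mem_setOf_eq, Set.mem_empty_iff_false, iff_false]
      intro h
      obtain ⟨m, hm⟩ := exists_nat_ge |z|
      exact absurd (h m) (not_lt.mpr hm))
    (show (0:ℝ) < ε/3 by linarith)
  set L : ℝ := (l:ℝ) + 1 with hL
  have hL1 : (1:ℝ) ≤ L := by have h0 : (0:ℝ) ≤ (l:ℝ) := Nat.cast_nonneg l; rw [hL]; linarith
  have hLtail : (γ {z | L < |z|}).toReal < ε/3 := by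
    refine lt_of_le_of_lt ?_ hl
    refine ENNReal.toReal_mono (measure_ne_top _ _) (measure_mono fun z hz => ?_)
    simp only [Set.mem_setOf_eq] at hz ⊢; linarith
  set M : ℝ := K * L with hM
  have hM1 : (1:ℝ) ≤ M := by nlinarith
  set F : BoundedContinuousFunction ℝ ℝ := 1 - bump M with hF
  have hFapp : ∀ x, F x = 1 - bump M x := fun x => rfl
  have hF0 : ∀ x, 0 ≤ F x := fun x => by rw [hFapp]; linarith [bump_le_one M x]
  have hF1 : ∀ x, F x ≤ 1 := fun x => by rw [hFapp]; linarith [bump_nonneg M x]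
  have hFone : ∀ x, M + 1 ≤ |x| → F x = 1 := fun x hx => by rw [hFapp, bump_eq_zero hx]; ring
  have hFzero : ∀ x, |x| ≤ M → F x = 0 := fun x hx => by rw [hFapp, bump_eq_one hx]; ring
  have hT := hstable F (fun _ => 1) measurable_const ⟨1, fun ω => by norm_num⟩
  simp only [one_mul] at hT
  set A := ∫ ω, ∫ z, F (V ω * z) ∂γ ∂P with hA
  set tK : Set Ω := {ω | K < V ω} with htK
  have htKm : MeasurableSet tK := measurableSet_lt measurable_const hVmeas
  set cL := (γ {z | L < |z|}).toReal with hcL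
  have hcL0 : 0 ≤ cL := ENNReal.toReal_nonneg
  have hLm : MeasurableSet {z : ℝ | L < |z|} := measurableSet_lt measurable_const measurable_abs
  have hFint : ∀ ω, Integrable (fun z => F (V ω * z)) γ := fun ω =>
    integrable_of_bound γ ((F.continuous.measurable.comp
      (measurable_const_mul (V ω))).aestronglyMeasurable) 1
      (fun z => abs_le.mpr ⟨by linarith [hF0 (V ω * z)], hF1 _⟩)
  have hinner : ∀ ω, ∫ z, F (V ω * z) ∂γ ≤ tK.indicator (fun _ => 1) ω + cL := by
    intro ω
    by_cases hωK : V ω ≤ K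
    · have h1 : ∫ z, F (V ω * z) ∂γ ≤ ∫ z, ({z : ℝ | L < |z|}).indicator (fun _ => (1:ℝ)) z ∂γ := by
        refine integral_mono (hFint ω) ((integrable_const (1:ℝ)).indicator hLm) (fun z => ?_)
        by_cases hz : z ∈ {z : ℝ | L < |z|}
        · rw [Set.indicator_of_mem hz]; exact hF1 _
        · rw [Set.indicator_of_notMem hz]
          simp only [Set.mem_setOf_eq, not_lt] at hz
          have hVz : |V ω * z| ≤ M := by
            rw [abs_mul, abs_of_pos (hVpos ω)]
            calc V ω * |z| ≤ K * L := mul_le_mul hωK hz (abs_nonneg z) (by linarith)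
            _ = M := hM.symm
          rw [hFzero _ hVz]
      rw [integral_indicator_const _ hLm] at h1
      simp only [smul_eq_mul, mul_one] at h1
      have hind : tK.indicator (fun _ => (1:ℝ)) ω = 0 :=
        Set.indicator_of_notMem (by simp only [htK, Set.mem_setOf_eq, not_lt]; exact hωK) _
      rw [hind, zero_add, hcL]
      exact h1
    · push_neg at hωK
      have h1 : ∫ z, F (V ω * z) ∂γ ≤ ∫ z, (1:ℝ) ∂γ :=
        integral_mono (hFint ω) (integrable_const 1) (fun z => hF1 _)
      rw [integral_const] at h1
      simp only [Measure.real, measure_univ, ENNReal.toReal_one, smul_eq_mul, one_mul, mul_one] at h1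
      have hind : tK.indicator (fun _ => (1:ℝ)) ω = 1 := Set.indicator_of_mem (show ω ∈ tK from hωK) _
      rw [hind]; linarith
  have hinnermeas : AEStronglyMeasurable (fun ω => ∫ z, F (V ω * z) ∂γ) P := by
    apply StronglyMeasurable.aestronglyMeasurable
    exact StronglyMeasurable.integral_prod_right'
      (f := fun p : Ω × ℝ => F (V p.1 * p.2))
      (F.continuous.measurable.comp ((hVmeas.comp measurable_fst).mul measurable_snd)).stronglyMeasurable
  have hinnerbd : ∀ ω, |∫ z, F (V ω * z) ∂γ| ≤ 1 := by
    intro ω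
    rw [abs_le]
    constructor
    · have h0 : (0:ℝ) ≤ ∫ z, F (V ω * z) ∂γ := integral_nonneg (fun z => hF0 _)
      linarith
    · have h1 : ∫ z, F (V ω * z) ∂γ ≤ ∫ z, (1:ℝ) ∂γ :=
        integral_mono (hFint ω) (integrable_const 1) (fun z => hF1 _)
      rw [integral_const] at h1
      simpa using h1
  have hAle : A ≤ (P tK).toReal + cL := by
    rw [hA]
    calc ∫ ω, ∫ z, F (V ω * z) ∂γ ∂P
        ≤ ∫ ω, (tK.indicator (fun _ => (1:ℝ)) ω + cL) ∂P :=
          integral_mono (integrable_of_bound P hinnermeas 1 hinnerbd)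
            (((integrable_const (1:ℝ)).indicator htKm).add (integrable_const cL)) hinner
      _ = (P tK).toReal + cL := by
          rw [integral_add ((integrable_const (1:ℝ)).indicator htKm) (integrable_const cL),
            integral_indicator_const _ htKm, integral_const]
          simp [Measure.real]
  have hAlt : A < ε := by
    linarith [hKtail, hLtail]
  refine ⟨M + 1, by linarith, ?_⟩
  filter_upwards [hT.eventually (gt_mem_nhds hAlt)] with n hn
  have hsm : MeasurableSet {ω | M + 1 < |X n ω|} :=
    measurableSet_lt measurable_const (hXmeas n).abs
  have h1 : (P {ω | M + 1 < |X n ω|}).toReal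
      = ∫ ω, ({ω | M + 1 < |X n ω|}).indicator (fun _ => (1:ℝ)) ω ∂P := by
    rw [integral_indicator_const _ hsm]; simp [Measure.real]
  have h2 : ∫ ω, ({ω | M + 1 < |X n ω|}).indicator (fun _ => (1:ℝ)) ω ∂P
      ≤ ∫ ω, F (X n ω) ∂P := by
    refine integral_mono ((integrable_const (1:ℝ)).indicator hsm)
      (integrable_of_bound P ((F.continuous.measurable.comp (hXmeas n)).aestronglyMeasurable) 1
        (fun ω => abs_le.mpr ⟨by linarith [hF0 (X n ω)], hF1 _⟩)) (fun ω => ?_)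
    by_cases hω : ω ∈ {ω | M + 1 < |X n ω|}
    · rw [Set.indicator_of_mem hω]
      exact (hFone _ (le_of_lt hω)).ge
    · rw [Set.indicator_of_notMem hω]
      exact hF0 _
  rw [h1]
  exact lt_of_le_of_lt h2 hn

end StableAux

open StableAux in
/-- If `Xₙ` converges stably in law to the mixed normal `V·Z` with `V` strictly positive
and measurable, and `Vₙ → V` in probability with `Vₙ > 0`, then `Xₙ / Vₙ` converges in
distribution to a standard normal random variable. -/
theorem stmt0 {Ω : Type*} [MeasurableSpace Ω] (P : Measure Ω) [IsProbabilityMeasure P]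
    (X : ℕ → Ω → ℝ) (V : Ω → ℝ) (Vn : ℕ → Ω → ℝ)
    (hXmeas : ∀ n, Measurable (X n)) (hVmeas : Measurable V)
    (hVnmeas : ∀ n, Measurable (Vn n))
    (hVpos : ∀ ω, 0 < V ω) (hVnpos : ∀ n ω, 0 < Vn n ω)
    (hstable : StablyToMixedNormal P X V)
    (hVn : TendstoInMeasure P Vn atTop V) :
    ∀ f : BoundedContinuousFunction ℝ ℝ,
      Tendsto (fun n => ∫ ω, f (X n ω / Vn n ω) ∂P) atTop
        (nhds (∫ z, f z ∂(gaussianReal 0 1))) := by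
  intro f
  set γ := gaussianReal 0 1 with hγ
  set C : ℝ := ‖f‖ + 1 with hCdef
  have hC1 : 1 ≤ C := by have := norm_nonneg f; rw [hCdef]; linarith
  have hC0 : 0 < C := by linarith
  have hCf : ∀ x, |f x| ≤ C := fun x => by
    have h := f.norm_coe_le_norm x
    rw [Real.norm_eq_abs] at h; linarith
  set If := ∫ z, f z ∂γ with hIf
  have hIfbd : |If| ≤ C := by
    have h := norm_integral_le_of_norm_le_const (μ := γ) (C := C) (f := fun z => f z)
      (ae_of_all _ fun z => by rw [Real.norm_eq_abs]; exact hCf z)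
    rw [Real.norm_eq_abs] at h
    simpa using h
  rw [Metric.tendsto_nhds]
  intro ε hε
  set ε₁ := ε / (16 * C) with hε₁def
  have hε₁pos : 0 < ε₁ := by positivity
  -- parameter δ
  obtain ⟨kδ, hkδ⟩ := exists_measure_tail_lt P (fun k => {ω | V ω < 1/((k:ℝ)+1)})
    (fun k => measurableSet_lt hVmeas measurable_const)
    (fun i j hij ω hω => by
      simp only [Set.mem_setOf_eq] at hω ⊢
      exact lt_of_lt_of_le hω (by gcongr <;> exact_mod_cast hij))
    (by
      ext ω
      simp only [Set.mem_iInter, Set.mem_setOf_eq, Set.mem_empty_iff_false, iff_false]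
      intro h
      obtain ⟨m, hm⟩ := exists_nat_one_div_lt (hVpos ω)
      exact absurd (h m) (not_lt.mpr (le_of_lt hm)))
    hε₁pos
  set δ : ℝ := 1/((kδ:ℝ)+1) with hδdef
  have hδpos : 0 < δ := by positivity
  have hδ1 : δ ≤ 1 := by
    rw [hδdef, div_le_one (by positivity)]
    have : (0:ℝ) ≤ (kδ:ℝ) := Nat.cast_nonneg _
    linarith
  have hδtail : (P {ω | V ω < δ}).toReal < ε₁ := hkδ
  -- parameter K
  obtain ⟨kK, hkK⟩ := exists_measure_tail_lt P (fun k => {ω | (k:ℝ) < V ω})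
    (fun k => measurableSet_lt measurable_const hVmeas)
    (fun i j hij ω hω => lt_of_le_of_lt (show (i:ℝ) ≤ j from Nat.cast_le.mpr hij) hω)
    (by
      ext ω; simp only [Set.mem_iInter, Set.mem_setOf_eq, Set.mem_empty_iff_false, iff_false]
      intro h
      obtain ⟨m, hm⟩ := exists_nat_ge (V ω)
      exact absurd (h m) (not_lt.mpr hm))
    hε₁pos
  set K : ℝ := (kK:ℝ) + 1 with hKdef
  have hK1 : (1:ℝ) ≤ K := by
    have h0 : (0:ℝ) ≤ (kK:ℝ) := Nat.cast_nonneg _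
    rw [hKdef]; linarith
  have hKtail : (P {ω | K < V ω}).toReal < ε₁ := by
    refine lt_of_le_of_lt ?_ hkK
    refine ENNReal.toReal_mono (measure_ne_top _ _) (measure_mono fun ω hω => ?_)
    simp only [Set.mem_setOf_eq] at hω ⊢
    linarith
  -- parameter L
  obtain ⟨kL, hkL⟩ := exists_measure_tail_lt γ (fun l => {z | (l:ℝ) < |z|})
    (fun l => measurableSet_lt measurable_const measurable_abs)
    (fun i j hij z hz => lt_of_le_of_lt (show (i:ℝ) ≤ j from Nat.cast_le.mpr hij) hz)
    (by
      ext z; simp only [Set.mem_iInter, Set.mem_setOf_eq, Set.mem_empty_iff_false, iff_false]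
      intro h
      obtain ⟨m, hm⟩ := exists_nat_ge |z|
      exact absurd (h m) (not_lt.mpr hm))
    hε₁pos
  set L : ℝ := (kL:ℝ) + 1 with hLdef
  have hL1 : (1:ℝ) ≤ L := by
    have h0 : (0:ℝ) ≤ (kL:ℝ) := Nat.cast_nonneg _
    rw [hLdef]; linarith
  have hLm : MeasurableSet {z : ℝ | L < |z|} := measurableSet_lt measurable_const measurable_abs
  have hLtail : (γ {z | L < |z|}).toReal < ε₁ := by
    refine lt_of_le_of_lt ?_ hkL
    refine ENNReal.toReal_mono (measure_ne_top _ _) (measure_mono fun z hz => ?_)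
    simp only [Set.mem_setOf_eq] at hz ⊢
    linarith
  -- parameter M (tightness)
  obtain ⟨M, hM1, hMev⟩ := exists_tight P X V hXmeas hVmeas hVpos hstable hε₁pos
  -- modulus of continuity
  set R : ℝ := (2*M + (L+1)*(K+1))/δ with hRdef
  have hRpos : 0 < R := by
    rw [hRdef]
    have : (0:ℝ) < 2*M + (L+1)*(K+1) := by nlinarith
    positivity
  have hLK0 : (0:ℝ) ≤ (L+1)*(K+1) := mul_nonneg (by linarith) (by linarith)
  have hR1 : M/(δ/2) ≤ R := by
    rw [div_div_eq_mul_div, hRdef]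
    apply div_le_div₀ (by linarith) (by linarith) hδpos le_rfl
  have hR2 : M/δ ≤ R := by
    rw [hRdef]
    apply div_le_div₀ (by linarith) (by linarith) hδpos le_rfl
  obtain ⟨ρ, hρpos, hρ1, hρ⟩ : ∃ ρ, 0 < ρ ∧ ρ ≤ 1 ∧ ∀ x ∈ Set.Icc (-R) R,
      ∀ y ∈ Set.Icc (-R) R, |x - y| ≤ ρ → |f x - f y| ≤ ε₁ := by
    have huc : UniformContinuousOn f (Set.Icc (-R) R) :=
      isCompact_Icc.uniformContinuousOn_of_continuous f.continuous.continuousOn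
    rw [Metric.uniformContinuousOn_iff] at huc
    obtain ⟨d, hd, hduc⟩ := huc ε₁ hε₁pos
    refine ⟨min (d/2) 1, by positivity, min_le_right _ _, fun x hx y hy hxy => ?_⟩
    have h2 := hduc x hx y hy (show dist x y < d by
      rw [Real.dist_eq]
      have := min_le_left (d/2) 1
      linarith)
    rw [Real.dist_eq] at h2
    linarith
  -- parameter η
  set η : ℝ := min (ρ*δ^2/(8*M)) (ρ*δ/(2*L)) with hηdef
  have hηpos : 0 < η := by
    rw [hηdef]
    have h1 : (0:ℝ) < ρ*δ^2/(8*M) := by positivity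
    have h2 : (0:ℝ) < ρ*δ/(2*L) := by positivity
    exact lt_min h1 h2
  have hη1 : η * (8*M) ≤ ρ*δ^2 := by
    have := min_le_left (ρ*δ^2/(8*M)) (ρ*δ/(2*L))
    rw [← hηdef] at this
    rw [← le_div_iff₀ (by positivity)]
    exact this
  have hη2 : η * (2*L) ≤ ρ*δ := by
    have := min_le_right (ρ*δ^2/(8*M)) (ρ*δ/(2*L))
    rw [← hηdef] at this
    rw [← le_div_iff₀ (by positivity)]
    exact this
  have hηδ : η ≤ δ/2 := by nlinarith [sq_nonneg δ]
  have hη1' : M*(2*η) ≤ ρ*((δ/2)*δ) := by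
    have hρδ : 0 ≤ ρ*δ^2 := mul_nonneg (le_of_lt hρpos) (sq_nonneg δ)
    nlinarith [hη1, hρδ]
  -- partition
  set N : ℕ := Nat.floor ((K-δ)/η) + 1 with hNdef
  set c : ℕ → ℝ := fun j => δ + j*η with hcdef
  set A : ℕ → Set Ω := fun j => {ω | c j ≤ V ω ∧ V ω < c j + η} with hAdef
  have hAmeas : ∀ j, MeasurableSet (A j) := fun j =>
    (measurableSet_le measurable_const hVmeas).inter (measurableSet_lt hVmeas measurable_const)
  have hc : ∀ j, c j = δ + j*η := fun j => rfl
  have hAmem : ∀ j ω, ω ∈ A j ↔ c j ≤ V ω ∧ V ω < c j + η := fun j ω => Iff.rfl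
  have hAdisj : ∀ i j, i ≠ j → Disjoint (A i) (A j) := by
    have key : ∀ i j, i < j → Disjoint (A i) (A j) := by
      intro i j hij
      rw [Set.disjoint_left]
      intro ω hωi hωj
      obtain ⟨hi1, hi2⟩ := (hAmem i ω).mp hωi
      obtain ⟨hj1, hj2⟩ := (hAmem j ω).mp hωj
      rw [hc i] at hi2
      rw [hc j] at hj1
      have hij' : (i:ℝ) + 1 ≤ (j:ℝ) := by exact_mod_cast hij
      have hmul := mul_le_mul_of_nonneg_right hij' (le_of_lt hηpos)
      nlinarith
    intro i j hij
    rcases lt_or_gt_of_ne hij with h | h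
    · exact key i j h
    · exact (key j i h).symm
  have hcover : ∀ ω, δ ≤ V ω → V ω ≤ K → ∃ j, j < N ∧ ω ∈ A j := by
    intro ω h1 h2
    have hx0 : 0 ≤ (V ω - δ)/η := div_nonneg (by linarith) (le_of_lt hηpos)
    refine ⟨Nat.floor ((V ω - δ)/η), ?_, (hAmem _ _).mpr ⟨?_, ?_⟩⟩
    · have hmono : Nat.floor ((V ω - δ)/η) ≤ Nat.floor ((K-δ)/η) :=
        Nat.floor_le_floor (by gcongr)
      rw [hNdef]
      omega
    · rw [hc _]
      have hfl : ((Nat.floor ((V ω - δ)/η)) : ℝ) ≤ (V ω - δ)/η := Nat.floor_le hx0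
      have hmul := mul_le_mul_of_nonneg_right hfl (le_of_lt hηpos)
      rw [div_mul_cancel₀ _ (ne_of_gt hηpos)] at hmul
      linarith
    · rw [hc _]
      have hfl : (V ω - δ)/η < (Nat.floor ((V ω - δ)/η)) + 1 := Nat.lt_floor_add_one _
      have hmul := mul_lt_mul_of_pos_right hfl hηpos
      rw [div_mul_cancel₀ _ (ne_of_gt hηpos)] at hmul
      push_cast at hmul ⊢
      linarith
  -- the composed bounded continuous functions and indicator weights
  have hcjpos : ∀ j, 0 < c j := by
    intro j
    rw [hc j]
    have : 0 ≤ (j:ℝ)*η := by positivity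
    linarith
  have hcjδ : ∀ j, δ ≤ c j := by
    intro j
    rw [hc j]
    have : 0 ≤ (j:ℝ)*η := by positivity
    linarith
  have hcjK : ∀ j, j < N → c j ≤ K := by
    intro j hj
    have h1 : j ≤ Nat.floor ((K-δ)/η) := by
      rw [hNdef] at hj; omega
    have h2 : (j:ℝ) ≤ (K-δ)/η :=
      le_trans (Nat.cast_le.mpr h1) (Nat.floor_le (div_nonneg (by linarith) (le_of_lt hηpos)))
    have h3 := mul_le_mul_of_nonneg_right h2 (le_of_lt hηpos)
    rw [div_mul_cancel₀ _ (ne_of_gt hηpos)] at h3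
    rw [hc j]; linarith
  set g : ℕ → BoundedContinuousFunction ℝ ℝ :=
    fun j => f.compContinuous ⟨fun x => x / c j, by fun_prop⟩ with hgdef
  have hgapp : ∀ j x, g j x = f (x / c j) := fun j x => rfl
  set Zf : ℕ → Ω → ℝ := fun j => (A j).indicator (fun _ => 1) with hZdef
  have hZf_ind : ∀ j, Zf j = (A j).indicator (fun _ => (1:ℝ)) := fun j => rfl
  have hZmem : ∀ j ω, ω ∈ A j → Zf j ω = 1 := fun j ω h => by
    rw [hZf_ind j, Set.indicator_of_mem h]
  have hZnot : ∀ j ω, ω ∉ A j → Zf j ω = 0 := fun j ω h => by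
    rw [hZf_ind j, Set.indicator_of_notMem h]
  have hZmeas : ∀ j, Measurable (Zf j) := fun j => measurable_const.indicator (hAmeas j)
  have hZbd : ∀ j ω, |Zf j ω| ≤ 1 := by
    intro j ω
    by_cases h : ω ∈ A j
    · rw [hZmem j ω h]; norm_num
    · rw [hZnot j ω h]; norm_num
  have hZ0 : ∀ j ω, 0 ≤ Zf j ω := by
    intro j ω
    by_cases h : ω ∈ A j
    · rw [hZmem j ω h]; norm_num
    · rw [hZnot j ω h]
  have hsum_eq : ∀ (ω : Ω) (j : ℕ), j ∈ Finset.range N → ω ∈ A j →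
      ∀ (G : ℕ → ℝ), (∑ b ∈ Finset.range N, Zf b ω * G b) = G j := by
    intro ω j hj hωj G
    rw [Finset.sum_eq_single_of_mem j hj]
    · rw [hZmem j ω hωj, one_mul]
    · intro b _ hbj
      rw [hZnot b ω (fun hcb => Set.disjoint_left.mp (hAdisj b j hbj) hcb hωj), zero_mul]
  have hsum_zero : ∀ ω, (∀ b, b ∈ Finset.range N → ω ∉ A b) →
      ∀ (G : ℕ → ℝ), (∑ b ∈ Finset.range N, Zf b ω * G b) = 0 := by
    intro ω hω G
    exact Finset.sum_eq_zero fun b hb => by rw [hZnot b ω (hω b hb), zero_mul]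
  set S := ∑ j ∈ Finset.range N, ∫ ω, ∫ z, Zf j ω * (g j) (V ω * z) ∂γ ∂P with hS
  have hTend : Tendsto (fun n => ∑ j ∈ Finset.range N, ∫ ω, Zf j ω * (g j) (X n ω) ∂P)
      atTop (𝓝 S) :=
    tendsto_finset_sum _ (fun j _ => hstable (g j) (Zf j) (hZmeas j) ⟨1, hZbd j⟩)
  have hVnev : ∀ᶠ n in atTop, (P {ω | η < |Vn n ω - V ω|}).toReal < ε₁ := by
    have h0 := (tendstoInMeasure_iff_dist.mp hVn η hηpos).eventually (gt_mem_nhds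
      (show (0:ENNReal) < ENNReal.ofReal ε₁ from ENNReal.ofReal_pos.mpr hε₁pos))
    filter_upwards [h0] with n hn
    have hsub : {ω | η < |Vn n ω - V ω|} ⊆ {x | η ≤ dist (Vn n x) (V x)} := by
      intro ω hω
      simp only [Set.mem_setOf_eq, Real.dist_eq] at hω ⊢
      linarith
    exact (ENNReal.lt_ofReal_iff_toReal_lt (measure_ne_top _ _)).mp
      (lt_of_le_of_lt (measure_mono hsub) hn)
  have hSev : ∀ᶠ n in atTop,
      |(∑ j ∈ Finset.range N, ∫ ω, Zf j ω * (g j) (X n ω) ∂P) - S| < ε₁ := by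
    filter_upwards [Metric.tendsto_nhds.mp hTend ε₁ hε₁pos] with n hn
    rw [Real.dist_eq] at hn
    exact hn
  -- inner z-integral estimate
  have hgint : ∀ (j : ℕ) (t : ℝ), Integrable (fun z => (g j) (t * z)) γ := fun j t =>
    integrable_of_bound γ (((g j).continuous.measurable.comp
      (measurable_const_mul t)).aestronglyMeasurable) C
      (fun z => by rw [hgapp]; exact hCf _)
  have hfint : Integrable (fun z : ℝ => f z) γ :=
    integrable_of_bound γ (f.continuous.measurable.aestronglyMeasurable) C (fun z => hCf z)
  have hGj : ∀ j, j < N → ∀ ω,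
      |(∫ z, Zf j ω * (g j) (V ω * z) ∂γ) - Zf j ω * If| ≤ Zf j ω * (ε₁ + 2*C*ε₁) := by
    intro j hj ω
    by_cases hω : ω ∈ A j
    · rw [hZmem j ω hω]
      simp only [one_mul]
      obtain ⟨hcl, hcu⟩ := (hAmem j ω).mp hω
      have hVK1 : V ω ≤ K + 1 := by
        have := hcjK j hj
        linarith [hηδ, hδ1]
      have key : |(∫ z, (g j) (V ω * z) ∂γ) - ∫ z, f z ∂γ| ≤ ε₁ + (2*C) * (γ {z | L < |z|}).toReal := by
        refine abs_integral_sub_le γ (hgint j (V ω)) hfint hLm (le_of_lt hε₁pos)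
          (by linarith) ?_ ?_
        · intro z hz
          simp only [Set.mem_setOf_eq, not_lt] at hz
          rw [hgapp]
          have hx_abs : |V ω * z / c j| ≤ (K+1)*L/δ := by
            rw [abs_div, abs_mul, abs_of_pos (hVpos ω), abs_of_pos (hcjpos j)]
            exact div_le_div₀ (by positivity)
              (mul_le_mul hVK1 hz (abs_nonneg z) (by linarith)) hδpos (hcjδ j)
          have hxR : |V ω * z / c j| ≤ R := by
            refine le_trans hx_abs ?_
            rw [hRdef]
            gcongr
            nlinarith
          have hzR : |z| ≤ R := by
            refine le_trans hz ?_
            rw [hRdef, le_div_iff₀ hδpos]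
            nlinarith
          have hdiff : |V ω * z / c j - z| ≤ ρ := by
            have heq : V ω * z / c j - z = z * (V ω - c j) / c j := by
              rw [mul_sub, sub_div, mul_div_cancel_right₀ z (hcjpos j).ne', mul_comm z (V ω)]
            rw [heq, abs_div, abs_mul, abs_of_pos (hcjpos j)]
            have hVc : |V ω - c j| ≤ η := by
              rw [abs_of_nonneg (by linarith)]
              linarith
            have h1 : |z| * |V ω - c j| ≤ L * η :=
              mul_le_mul hz hVc (abs_nonneg _) (by linarith)
            have h2 : |z| * |V ω - c j| / c j ≤ L*η/δ :=
              div_le_div₀ (by positivity) h1 hδpos (hcjδ j)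
            have h3 : L*η/δ ≤ ρ := by
              rw [div_le_iff₀ hδpos]
              nlinarith
            linarith
          exact hρ _ (Set.mem_Icc.mpr (abs_le.mp hxR)) _ (Set.mem_Icc.mpr (abs_le.mp hzR)) hdiff
        · intro z
          have h1 : |(g j) (V ω * z)| ≤ C := by rw [hgapp]; exact hCf _
          have h2 : |f z| ≤ C := hCf z
          have := abs_add_le ((g j) (V ω * z)) (-(f z))
          rw [abs_neg] at this
          rw [sub_eq_add_neg]
          linarith
      have htail : (2*C) * (γ {z | L < |z|}).toReal ≤ 2*C*ε₁ :=
        mul_le_mul_of_nonneg_left (le_of_lt hLtail) (by linarith)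
      rw [← hIf] at key
      linarith [key, htail]
    · rw [hZnot j ω hω]
      simp only [zero_mul]
      simp
  -- measurability and boundedness of the inner integral in ω
  have hGmeas : ∀ j, AEStronglyMeasurable (fun ω => ∫ z, Zf j ω * (g j) (V ω * z) ∂γ) P := by
    intro j
    apply StronglyMeasurable.aestronglyMeasurable
    exact StronglyMeasurable.integral_prod_right'
      (f := fun p : Ω × ℝ => Zf j p.1 * (g j) (V p.1 * p.2))
      (((hZmeas j).comp measurable_fst).mul ((g j).continuous.measurable.comp
        ((hVmeas.comp measurable_fst).mul measurable_snd))).stronglyMeasurable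
  have hGbd : ∀ j ω, |∫ z, Zf j ω * (g j) (V ω * z) ∂γ| ≤ C := by
    intro j ω
    have h := norm_integral_le_of_norm_le_const (μ := γ) (C := C)
      (f := fun z => Zf j ω * (g j) (V ω * z)) (ae_of_all _ fun z => by
        rw [Real.norm_eq_abs, abs_mul]
        calc |Zf j ω| * |(g j) (V ω * z)| ≤ 1 * C :=
              mul_le_mul (hZbd j ω) (by rw [hgapp]; exact hCf _) (abs_nonneg _) zero_le_one
          _ = C := one_mul C)
    rw [Real.norm_eq_abs] at h
    simpa using h
  have hGIint : ∀ j, Integrable (fun ω => ∫ z, Zf j ω * (g j) (V ω * z) ∂γ) P := fun j =>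
    integrable_of_bound P (hGmeas j) C (hGbd j)
  have hZint : ∀ j, ∫ ω, Zf j ω ∂P = (P (A j)).toReal := by
    intro j
    rw [hZf_ind j, integral_indicator_const _ (hAmeas j)]
    simp [Measure.real]
  have hT3 : ∀ j, j < N →
      |(∫ ω, ∫ z, Zf j ω * (g j) (V ω * z) ∂γ ∂P) - (P (A j)).toReal * If|
        ≤ (ε₁ + 2*C*ε₁) * (P (A j)).toReal := by
    intro j hj
    have hconst_pos : (0:ℝ) < ε₁ + 2*C*ε₁ := by
      have h2 := mul_pos (show (0:ℝ) < 2*C by linarith) hε₁pos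
      linarith
    have hIntZIf : Integrable (fun ω => Zf j ω * If) P :=
      integrable_of_bound P ((hZmeas j).mul measurable_const).aestronglyMeasurable C
        (fun ω => by
          rw [abs_mul]
          calc |Zf j ω| * |If| ≤ 1 * C := mul_le_mul (hZbd j ω) hIfbd (abs_nonneg _) zero_le_one
            _ = C := one_mul C)
    have h1 : ∫ ω, Zf j ω * If ∂P = (P (A j)).toReal * If := by
      rw [integral_mul_const, hZint j]
    rw [← h1, ← integral_sub (hGIint j) hIntZIf]
    calc |∫ ω, ((∫ z, Zf j ω * (g j) (V ω * z) ∂γ) - Zf j ω * If) ∂P|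
        ≤ ∫ ω, |(∫ z, Zf j ω * (g j) (V ω * z) ∂γ) - Zf j ω * If| ∂P := by
          simpa [Real.norm_eq_abs] using norm_integral_le_integral_norm (μ := P)
            (fun ω => (∫ z, Zf j ω * (g j) (V ω * z) ∂γ) - Zf j ω * If)
      _ ≤ ∫ ω, (ε₁ + 2*C*ε₁) * Zf j ω ∂P := by
          refine integral_mono ((hGIint j).sub hIntZIf).abs
            (integrable_of_bound P (measurable_const.mul (hZmeas j)).aestronglyMeasurable
              (ε₁ + 2*C*ε₁) (fun ω => by
                rw [abs_mul, abs_of_nonneg (le_of_lt hconst_pos)]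
                calc (ε₁ + 2*C*ε₁) * |Zf j ω| ≤ (ε₁ + 2*C*ε₁) * 1 :=
                      mul_le_mul_of_nonneg_left (hZbd j ω) (le_of_lt hconst_pos)
                  _ = ε₁ + 2*C*ε₁ := mul_one _))
            (fun ω => (hGj j hj ω).trans_eq (mul_comm _ _))
      _ = (ε₁ + 2*C*ε₁) * (P (A j)).toReal := by rw [integral_const_mul, hZint j]
  -- union of partition sets
  have hcp : (0:ℝ) < ε₁ + 2*C*ε₁ := by
    have h2 := mul_pos (show (0:ℝ) < 2*C by linarith) hε₁pos
    linarith
  set U : Set Ω := ⋃ j ∈ Finset.range N, A j with hUdef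
  have hUmeas : MeasurableSet U := Finset.measurableSet_biUnion _ (fun j _ => hAmeas j)
  have hPsum : ∑ j ∈ Finset.range N, (P (A j)).toReal = (P U).toReal := by
    rw [hUdef, measure_biUnion_finset (fun i _ j _ hij => hAdisj i j hij) (fun j _ => hAmeas j)]
    exact (ENNReal.toReal_sum (fun j _ => measure_ne_top _ _)).symm
  have hPU1 : (P U).toReal ≤ 1 := by
    have h1 : P U ≤ 1 := prob_le_one
    have h2 := ENNReal.toReal_mono ENNReal.one_ne_top h1
    simpa using h2
  have hPsum_le_one : ∑ j ∈ Finset.range N, (P (A j)).toReal ≤ 1 := by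
    rw [hPsum]; exact hPU1
  have hUc : 1 - 2*ε₁ ≤ (P U).toReal := by
    have hsub : Uᶜ ⊆ {ω | V ω < δ} ∪ {ω | K < V ω} := by
      intro ω hω
      by_contra hcon
      simp only [Set.mem_union, Set.mem_setOf_eq, not_or, not_lt] at hcon
      obtain ⟨j, hjN, hωj⟩ := hcover ω hcon.1 hcon.2
      exact hω (Set.mem_biUnion (Finset.mem_range.mpr hjN) hωj)
    have h2 : P Uᶜ ≤ P {ω | V ω < δ} + P {ω | K < V ω} :=
      (measure_mono hsub).trans (measure_union_le _ _)
    have h3 : (P Uᶜ).toReal ≤ (P {ω | V ω < δ}).toReal + (P {ω | K < V ω}).toReal := by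
      refine (ENNReal.toReal_mono ?_ h2).trans_eq
        (ENNReal.toReal_add (measure_ne_top _ _) (measure_ne_top _ _))
      exact ENNReal.add_ne_top.mpr ⟨measure_ne_top _ _, measure_ne_top _ _⟩
    have h4 : (P U).toReal + (P Uᶜ).toReal = 1 := by
      have h5 := measure_add_measure_compl (μ := P) hUmeas
      have h6 := congrArg ENNReal.toReal h5
      rw [ENNReal.toReal_add (measure_ne_top _ _) (measure_ne_top _ _)] at h6
      simpa using h6
    linarith
  have hT3sum : |S - ∑ j ∈ Finset.range N, (P (A j)).toReal * If| ≤ (ε₁ + 2*C*ε₁) * 1 := by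
    rw [hS, ← Finset.sum_sub_distrib]
    calc |∑ j ∈ Finset.range N,
          ((∫ ω, ∫ z, Zf j ω * (g j) (V ω * z) ∂γ ∂P) - (P (A j)).toReal * If)|
        ≤ ∑ j ∈ Finset.range N,
            |(∫ ω, ∫ z, Zf j ω * (g j) (V ω * z) ∂γ ∂P) - (P (A j)).toReal * If| :=
          Finset.abs_sum_le_sum_abs _ _
      _ ≤ ∑ j ∈ Finset.range N, (ε₁ + 2*C*ε₁) * (P (A j)).toReal :=
          Finset.sum_le_sum (fun j hj => hT3 j (Finset.mem_range.mp hj))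
      _ = (ε₁ + 2*C*ε₁) * ∑ j ∈ Finset.range N, (P (A j)).toReal := by
          rw [Finset.mul_sum]
      _ ≤ (ε₁ + 2*C*ε₁) * 1 := mul_le_mul_of_nonneg_left hPsum_le_one (le_of_lt hcp)
  have hT4 : |(∑ j ∈ Finset.range N, (P (A j)).toReal * If) - If| ≤ 2*ε₁*C := by
    rw [← Finset.sum_mul, hPsum]
    have h1 : |(P U).toReal - 1| ≤ 2*ε₁ := abs_le.mpr ⟨by linarith, by linarith⟩
    calc |(P U).toReal * If - If| = |((P U).toReal - 1) * If| := by
          congr 1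
          ring
      _ = |(P U).toReal - 1| * |If| := abs_mul _ _
      _ ≤ (2*ε₁) * C := mul_le_mul h1 hIfbd (abs_nonneg _) (by linarith)
      _ = 2*ε₁*C := by ring
  have hεtotal : ε₁ * (16*C) = ε := by
    rw [hε₁def]
    field_simp
  filter_upwards [hMev, hVnev, hSev] with n hn1 hn2 hn3
  rw [Real.dist_eq]
  set bad : Set Ω := {ω | V ω < δ} ∪ ({ω | K < V ω} ∪ ({ω | M < |X n ω|}
    ∪ {ω | η < |Vn n ω - V ω|})) with hbaddef
  have hbadmeas : MeasurableSet bad :=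
    (measurableSet_lt hVmeas measurable_const).union
      ((measurableSet_lt measurable_const hVmeas).union
        ((measurableSet_lt measurable_const (hXmeas n).abs).union
          (measurableSet_lt measurable_const ((hVnmeas n).sub hVmeas).abs)))
  have hPbad : (P bad).toReal ≤ 4*ε₁ := by
    have ne1 : P {ω | M < |X n ω|} + P {ω | η < |Vn n ω - V ω|} ≠ ⊤ :=
      ENNReal.add_ne_top.mpr ⟨measure_ne_top _ _, measure_ne_top _ _⟩
    have ne2 : P {ω | K < V ω} + (P {ω | M < |X n ω|} + P {ω | η < |Vn n ω - V ω|}) ≠ ⊤ :=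
      ENNReal.add_ne_top.mpr ⟨measure_ne_top _ _, ne1⟩
    have ne3 : P {ω | V ω < δ} + (P {ω | K < V ω}
        + (P {ω | M < |X n ω|} + P {ω | η < |Vn n ω - V ω|})) ≠ ⊤ :=
      ENNReal.add_ne_top.mpr ⟨measure_ne_top _ _, ne2⟩
    have hb1 : P bad ≤ P {ω | V ω < δ} + (P {ω | K < V ω}
        + (P {ω | M < |X n ω|} + P {ω | η < |Vn n ω - V ω|})) :=
      (measure_union_le _ _).trans (add_le_add le_rfl ((measure_union_le _ _).trans
        (add_le_add le_rfl (measure_union_le _ _))))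
    have hb2 := ENNReal.toReal_mono ne3 hb1
    rw [ENNReal.toReal_add (measure_ne_top _ _) ne2,
      ENNReal.toReal_add (measure_ne_top _ _) ne1,
      ENNReal.toReal_add (measure_ne_top _ _) (measure_ne_top _ _)] at hb2
    linarith
  have hfXVint : Integrable (fun ω => f (X n ω / Vn n ω)) P :=
    integrable_of_bound P ((f.continuous.measurable.comp
      ((hXmeas n).div (hVnmeas n))).aestronglyMeasurable) C (fun ω => hCf _)
  have hterm : ∀ j, Integrable (fun ω => Zf j ω * (g j) (X n ω)) P := fun j =>
    integrable_of_bound P (((hZmeas j).mul ((g j).continuous.measurable.comp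
      (hXmeas n))).aestronglyMeasurable) C (fun ω => by
        rw [abs_mul]
        calc |Zf j ω| * |(g j) (X n ω)| ≤ 1 * C :=
              mul_le_mul (hZbd j ω) (by rw [hgapp]; exact hCf _) (abs_nonneg _) zero_le_one
          _ = C := one_mul C)
  have hhint : Integrable (fun ω => ∑ j ∈ Finset.range N, Zf j ω * (g j) (X n ω)) P :=
    integrable_finset_sum _ (fun j _ => hterm j)
  have hT1 : |(∫ ω, f (X n ω / Vn n ω) ∂P)
      - ∫ ω, (∑ j ∈ Finset.range N, Zf j ω * (g j) (X n ω)) ∂P|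
      ≤ ε₁ + (2*C) * (P bad).toReal := by
    refine abs_integral_sub_le P hfXVint hhint hbadmeas (le_of_lt hε₁pos) (by linarith) ?_ ?_
    · intro ω hω
      rw [hbaddef] at hω
      simp only [Set.mem_union, Set.mem_setOf_eq, not_or, not_lt] at hω
      obtain ⟨hVδ, hVK, hXM, hVnη⟩ := hω
      obtain ⟨j, hjN, hωj⟩ := hcover ω hVδ hVK
      rw [hsum_eq ω j (Finset.mem_range.mpr hjN) hωj, hgapp]
      have hVn2 : δ/2 ≤ Vn n ω := by
        have habs := abs_le.mp hVnη
        linarith [habs.1, hηδ]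
      have hx1 : |X n ω / Vn n ω| ≤ R := by
        rw [abs_div, abs_of_pos (hVnpos n ω)]
        calc |X n ω| / Vn n ω ≤ M / (δ/2) := div_le_div₀ (by linarith) hXM (by linarith) hVn2
          _ ≤ R := hR1
      have hx2 : |X n ω / c j| ≤ R := by
        rw [abs_div, abs_of_pos (hcjpos j)]
        calc |X n ω| / c j ≤ M / δ := div_le_div₀ (by linarith) hXM hδpos (hcjδ j)
          _ ≤ R := hR2
      have hdiff : |X n ω / Vn n ω - X n ω / c j| ≤ ρ := by
        have heq : X n ω / Vn n ω - X n ω / c j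
            = X n ω * (c j - Vn n ω) / (Vn n ω * c j) := by
          rw [div_sub_div _ _ (ne_of_gt (hVnpos n ω)) (ne_of_gt (hcjpos j))]
          congr 1
          ring
        rw [heq, abs_div, abs_mul, abs_of_pos (mul_pos (hVnpos n ω) (hcjpos j))]
        obtain ⟨hcl, hcu⟩ := (hAmem j ω).mp hωj
        have h1 : |c j - Vn n ω| ≤ 2*η := by
          have h2 : |c j - V ω| ≤ η := by
            rw [abs_of_nonpos (by linarith)]
            linarith
          have h3 : |V ω - Vn n ω| ≤ η := by
            rw [abs_sub_comm]
            exact hVnη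
          calc |c j - Vn n ω| = |(c j - V ω) + (V ω - Vn n ω)| := by
                congr 1
                ring
            _ ≤ |c j - V ω| + |V ω - Vn n ω| := abs_add_le _ _
            _ ≤ 2*η := by linarith
        have h4 : |X n ω| * |c j - Vn n ω| ≤ M * (2*η) :=
          mul_le_mul hXM h1 (abs_nonneg _) (by linarith)
        have h5 : (δ/2) * δ ≤ Vn n ω * c j :=
          mul_le_mul hVn2 (hcjδ j) (le_of_lt hδpos) (by linarith)
        have h6 : |X n ω| * |c j - Vn n ω| / (Vn n ω * c j) ≤ M * (2*η) / ((δ/2)*δ) :=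
          div_le_div₀ (mul_nonneg (by linarith) (by linarith)) h4
            (mul_pos (by linarith) hδpos) h5
        have h7 : M * (2*η) / ((δ/2)*δ) ≤ ρ := by
          rw [div_le_iff₀ (mul_pos (by linarith) hδpos)]
          exact hη1'
        linarith
      exact hρ _ (Set.mem_Icc.mpr (abs_le.mp hx1)) _ (Set.mem_Icc.mpr (abs_le.mp hx2)) hdiff
    · intro ω
      have hb1 : |f (X n ω / Vn n ω)| ≤ C := hCf _
      have hb2 : |∑ j ∈ Finset.range N, Zf j ω * (g j) (X n ω)| ≤ C := by
        by_cases hω : ∃ j ∈ Finset.range N, ω ∈ A j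
        · obtain ⟨j, hj, hωj⟩ := hω
          rw [hsum_eq ω j hj hωj, hgapp]
          exact hCf _
        · push_neg at hω
          rw [hsum_zero ω hω]
          simpa using le_of_lt hC0
      have htri := abs_add_le (f (X n ω / Vn n ω))
        (-(∑ j ∈ Finset.range N, Zf j ω * (g j) (X n ω)))
      rw [abs_neg] at htri
      rw [sub_eq_add_neg]
      linarith
  have hT2 : |(∫ ω, (∑ j ∈ Finset.range N, Zf j ω * (g j) (X n ω)) ∂P) - S| < ε₁ := by
    rw [integral_finset_sum _ (fun j _ => hterm j)]
    exact hn3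
  have htotal : |(∫ ω, f (X n ω / Vn n ω) ∂P) - If|
      ≤ |(∫ ω, f (X n ω / Vn n ω) ∂P)
          - ∫ ω, (∑ j ∈ Finset.range N, Zf j ω * (g j) (X n ω)) ∂P|
        + |(∫ ω, (∑ j ∈ Finset.range N, Zf j ω * (g j) (X n ω)) ∂P) - S|
        + |S - ∑ j ∈ Finset.range N, (P (A j)).toReal * If|
        + |(∑ j ∈ Finset.range N, (P (A j)).toReal * If) - If| := by
    have t1 := abs_sub_le (∫ ω, f (X n ω / Vn n ω) ∂P)
      (∫ ω, (∑ j ∈ Finset.range N, Zf j ω * (g j) (X n ω)) ∂P) If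
    have t2 := abs_sub_le (∫ ω, (∑ j ∈ Finset.range N, Zf j ω * (g j) (X n ω)) ∂P) S If
    have t3 := abs_sub_le S (∑ j ∈ Finset.range N, (P (A j)).toReal * If) If
    linarith
  have hbadbd : (2*C) * (P bad).toReal ≤ (2*C) * (4*ε₁) :=
    mul_le_mul_of_nonneg_left hPbad (by linarith)
  clear_value S If ε₁ C
  have hCε : 0 < C * ε₁ := mul_pos hC0 hε₁pos
  have hkey : ε₁ ≤ C * ε₁ := le_mul_of_one_le_left (le_of_lt hε₁pos) hC1
  linarith [htotal, hT1, hT2, hT3sum, hT4, hbadbd, hεtotal, hCε, hkey]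
end

section
/- For two strictly increasing finite sequences of observation times t_0 < t_1 < ... < t_n and τ_0 < τ_1 < ... < τ_m, the Hayashi–Yoshida double sum Σ_i Σ_j ΔX_{t_i} ΔY_{τ_j} 1{min(t_i,τ_j) > max(t_{i−1},τ_{j−1})} equals the single sum Σ_i ΔX_{t_i} (Y_{t_{i,+}} − Y_{t_{i−1,−}}), where t_{i,+} = min{τ_j : τ_j ≥ t_i} is the next-tick and t_{i,−} = max{τ_j : τ_j ≤ t_i} is the previous-tick interpolation time (assuming τ_0 ≤ t_0 ≤ t_n ≤ τ_m so the interpolations exist). -/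
open Finset
open scoped Classical

private lemma hy_key {m : ℕ} (τ : Fin (m + 1) → ℝ) (hτ : StrictMono τ) (Y : ℝ → ℝ)
    (s u : ℝ) (hsu : s < u) (h0 : τ 0 ≤ s) (h1 : u ≤ τ (Fin.last m)) :
    (∑ j : Fin m,
        (Y (τ j.succ) - Y (τ j.castSucc)) *
          (if max s (τ j.castSucc) < min u (τ j.succ) then 1 else 0))
      = Y (sInf {y : ℝ | (∃ j, τ j = y) ∧ u ≤ y}) -
        Y (sSup {y : ℝ | (∃ j, τ j = y) ∧ y ≤ s}) := by
  classical
  set A : Finset (Fin (m + 1)) := Finset.univ.filter (fun j => u ≤ τ j) with hA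
  set B : Finset (Fin (m + 1)) := Finset.univ.filter (fun j => τ j ≤ s) with hB
  have hAne : A.Nonempty := ⟨Fin.last m, by simp [hA, h1]⟩
  have hBne : B.Nonempty := ⟨0, by simp [hB, h0]⟩
  set a := A.min' hAne with ha
  set b := B.max' hBne with hb
  have hua : u ≤ τ a := by
    have := A.min'_mem hAne
    simpa [hA] using this
  have hbs : τ b ≤ s := by
    have := B.max'_mem hBne
    simpa [hB] using this
  have hba : b < a := by
    rw [← hτ.lt_iff_lt]
    exact lt_of_le_of_lt hbs (lt_of_lt_of_le hsu hua)
  -- characterizations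
  have hlt_a : ∀ j : Fin (m + 1), τ j < u ↔ j < a := by
    intro j
    constructor
    · intro h
      by_contra hc
      push_neg at hc
      exact absurd (le_trans hua (hτ.monotone hc)) (not_le.2 h)
    · intro h
      by_contra hc
      push_neg at hc
      have : j ∈ A := by simp [hA, hc]
      exact absurd (A.min'_le j this) (not_le.2 h)
  have hlt_b : ∀ j : Fin (m + 1), s < τ j ↔ b < j := by
    intro j
    constructor
    · intro h
      by_contra hc
      push_neg at hc
      exact absurd (le_trans (hτ.monotone hc) hbs) (not_le.2 h)
    · intro h
      by_contra hc
      push_neg at hc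
      have : j ∈ B := by simp [hB, hc]
      exact absurd (B.le_max' j this) (not_le.2 h)
  -- compute sInf and sSup
  have hInf : sInf {y : ℝ | (∃ j, τ j = y) ∧ u ≤ y} = τ a := by
    apply IsLeast.csInf_eq
    constructor
    · exact ⟨⟨a, rfl⟩, hua⟩
    · rintro y ⟨⟨j, rfl⟩, hy⟩
      have : j ∈ A := by simp [hA, hy]
      exact hτ.monotone (A.min'_le j this)
  have hSup : sSup {y : ℝ | (∃ j, τ j = y) ∧ y ≤ s} = τ b := by
    apply IsGreatest.csSup_eq
    constructor
    · exact ⟨⟨b, rfl⟩, hbs⟩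
    · rintro y ⟨⟨j, rfl⟩, hy⟩
      have : j ∈ B := by simp [hB, hy]
      exact hτ.monotone (B.le_max' j this)
  rw [hInf, hSup]
  -- rewrite the indicator condition
  have hcond : ∀ j : Fin m,
      (max s (τ j.castSucc) < min u (τ j.succ)) ↔ (b.val ≤ j.val ∧ j.val < a.val) := by
    intro j
    rw [max_lt_iff, lt_min_iff, lt_min_iff]
    have h1' : τ j.castSucc < τ j.succ := hτ (Fin.castSucc_lt_succ : j.castSucc < j.succ)
    constructor
    · rintro ⟨⟨_, hs⟩, ⟨hcu, _⟩⟩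
      have hb' : b < j.succ := (hlt_b _).1 hs
      have ha' : j.castSucc < a := (hlt_a _).1 hcu
      constructor
      · have := hb'
        simp only [Fin.lt_def, Fin.val_succ] at this
        omega
      · simpa [Fin.lt_def] using ha'
    · rintro ⟨hbj, hja⟩
      have hs : s < τ j.succ := (hlt_b _).2 (by simp [Fin.lt_def]; omega)
      have hcu : τ j.castSucc < u := (hlt_a _).2 (by simpa [Fin.lt_def] using hja)
      exact ⟨⟨hsu, hs⟩, ⟨hcu, h1'⟩⟩
  -- nat-indexed version
  set g : ℕ → ℝ := fun k => Y (τ ⟨min k m, by omega⟩) with hg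
  have ham : a.val ≤ m := by omega
  have step : ∀ j : Fin m,
      (Y (τ j.succ) - Y (τ j.castSucc)) *
          (if max s (τ j.castSucc) < min u (τ j.succ) then 1 else 0)
        = if b.val ≤ j.val ∧ j.val < a.val then g (j.val + 1) - g j.val else 0 := by
    intro j
    have hjm : j.val < m := j.isLt
    have e1 : g (j.val + 1) = Y (τ j.succ) := by
      simp only [hg]
      congr 2
      ext
      simp [Nat.min_eq_left (by omega : j.val + 1 ≤ m)]
    have e2 : g j.val = Y (τ j.castSucc) := by
      simp only [hg]
      congr 2
      ext
      simp [Nat.min_eq_left (by omega : j.val ≤ m)]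
    by_cases h : b.val ≤ j.val ∧ j.val < a.val
    · rw [if_pos h, if_pos ((hcond j).2 h), mul_one, e1, e2]
    · rw [if_neg h, if_neg (fun hc => h ((hcond j).1 hc)), mul_zero]
  calc
    (∑ j : Fin m,
        (Y (τ j.succ) - Y (τ j.castSucc)) *
          (if max s (τ j.castSucc) < min u (τ j.succ) then 1 else 0))
        = ∑ j : Fin m, if b.val ≤ j.val ∧ j.val < a.val then g (j.val + 1) - g j.val else 0 :=
          Finset.sum_congr rfl (fun j _ => step j)
    _ = ∑ k ∈ Finset.range m, if b.val ≤ k ∧ k < a.val then g (k + 1) - g k else 0 :=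
          Fin.sum_univ_eq_sum_range (fun k => if b.val ≤ k ∧ k < a.val then g (k + 1) - g k else 0) m
    _ = ∑ k ∈ (Finset.range m).filter (fun k => b.val ≤ k ∧ k < a.val), (g (k + 1) - g k) :=
          (Finset.sum_filter _ _).symm
    _ = ∑ k ∈ Finset.Ico b.val a.val, (g (k + 1) - g k) := by
          congr 1
          ext k
          simp only [Finset.mem_filter, Finset.mem_range, Finset.mem_Ico]
          omega
    _ = g a.val - g b.val := by
          rw [Finset.sum_Ico_eq_sub _ (Fin.lt_def.mp hba).le,
            Finset.sum_range_sub, Finset.sum_range_sub]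
          ring
    _ = Y (τ a) - Y (τ b) := by
          simp only [hg]
          congr 3 <;> [skip; skip] <;> ext
          · simp [Nat.min_eq_left ham]
          · simp [Nat.min_eq_left (by omega : b.val ≤ m)]

/-- The Hayashi–Yoshida double sum over all products of increments with overlapping
observation intervals equals the single sum of increments of `X` multiplied with the
next-tick / previous-tick interpolated increments of `Y`:
`Σᵢ Σⱼ ΔX_{tᵢ} ΔY_{τⱼ} 1{min(tᵢ,τⱼ) > max(tᵢ₋₁,τⱼ₋₁)} = Σᵢ ΔX_{tᵢ} (Y_{tᵢ,₊} − Y_{tᵢ₋₁,₋})`,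
where `tᵢ,₊ = min{τⱼ : τⱼ ≥ tᵢ}` and `tᵢ,₋ = max{τⱼ : τⱼ ≤ tᵢ}`, which exist since
`τ₀ ≤ t₀` and `tₙ ≤ τₘ`. -/
theorem stmt3 {n m : ℕ} (t : Fin (n + 1) → ℝ) (τ : Fin (m + 1) → ℝ)
    (ht : StrictMono t) (hτ : StrictMono τ) (X Y : ℝ → ℝ)
    (h0 : τ 0 ≤ t 0) (h1 : t (Fin.last n) ≤ τ (Fin.last m)) :
    (∑ i : Fin n, ∑ j : Fin m,
        (X (t i.succ) - X (t i.castSucc)) * (Y (τ j.succ) - Y (τ j.castSucc)) *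
          (if max (t i.castSucc) (τ j.castSucc) < min (t i.succ) (τ j.succ) then 1 else 0))
      = ∑ i : Fin n,
          (X (t i.succ) - X (t i.castSucc)) *
            (Y (sInf {y : ℝ | (∃ j, τ j = y) ∧ t i.succ ≤ y}) -
             Y (sSup {y : ℝ | (∃ j, τ j = y) ∧ y ≤ t i.castSucc})) := by
  refine Finset.sum_congr rfl (fun i _ => ?_)
  rw [← hy_key τ hτ Y (t i.castSucc) (t i.succ) (ht (Fin.castSucc_lt_succ : i.castSucc < i.succ))
    (le_trans h0 (ht.monotone (Fin.zero_le _))) (le_trans (ht.monotone (Fin.le_last _)) h1)]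
  rw [Finset.mul_sum]
  exact Finset.sum_congr rfl (fun j _ => by ring)
end
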